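/- Let B = ℤ/p^6 ⊕ ℤ/p^4 ⊕ ℤ/p^2 with generators x, y, z, and for λ ∈ {0,…,p−1} let A_λ ≤ B be generated by u = p²x + py + z and v_λ = p²y + pλz. Then for λ ≠ λ' there is no automorphism f of B with f(A_λ) = A_{λ'}. -/

import Mathlib

namespace Metabelian

variable {B : Type*} [AddCommGroup B]

/-- The subgroup `A` of `B` is bounded by `n`, i.e. `n • a = 0` for all `a ∈ A`. -/
class BoundedSub (A : AddSubgroup B) (n : ℕ) : Prop where
  bound : ∀ a : A, n • (a : B) = 0

lemma val_smul_eq {n : ℕ} (a : B) (h : n • a = 0) (x : ℕ) : (x % n) • a = x • a := by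
  conv_rhs => rw [← Nat.mod_add_div x n]
  rw [add_nsmul, mul_nsmul, h, smul_zero, add_zero]

/-- Birkhoff's construction `G(A ⊆ B) = (A ⊕ B) ⋊_ψ D` with `D = ℤ/n` where `n` bounds `A`:
the underlying set is `A × B × ℤ/n` and the (multiplicatively written) group operation is
`(a,b,d)·(a',b',d') = (a+a', b + d·ι(a') + b', d+d')`. -/
instance mgroup (A : AddSubgroup B) (n : ℕ) [NeZero n] [BoundedSub A n] :
    Group (A × B × ZMod n) where
  mul x y := (x.1 + y.1, x.2.1 + x.2.2.val • (y.1 : B) + y.2.1, x.2.2 + y.2.2)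
  one := (0, 0, 0)
  inv x := (-x.1, -x.2.1 + x.2.2.val • (x.1 : B), -x.2.2)
  mul_assoc x y z := by
    have hb := BoundedSub.bound (A := A) (n := n)
    refine Prod.ext (add_assoc _ _ _) (Prod.ext ?_ (add_assoc _ _ _))
    show x.2.1 + x.2.2.val • (y.1 : B) + y.2.1 + (x.2.2 + y.2.2).val • (z.1 : B) + z.2.1
        = x.2.1 + x.2.2.val • ((y.1 + z.1 : A) : B) + (y.2.1 + y.2.2.val • (z.1 : B) + z.2.1)
    rw [ZMod.val_add, val_smul_eq _ (hb z.1), AddSubgroup.coe_add, smul_add, add_nsmul]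
    abel
  one_mul x := by
    refine Prod.ext (zero_add _) (Prod.ext ?_ (zero_add _))
    show (0 : B) + (0 : ZMod n).val • (x.1 : B) + x.2.1 = x.2.1
    simp
  mul_one x := by
    refine Prod.ext (add_zero _) (Prod.ext ?_ (add_zero _))
    show x.2.1 + x.2.2.val • ((0 : A) : B) + 0 = x.2.1
    simp
  inv_mul_cancel x := by
    have hb := BoundedSub.bound (A := A) (n := n)
    refine Prod.ext (neg_add_cancel _) (Prod.ext ?_ (neg_add_cancel _))
    show -x.2.1 + x.2.2.val • (x.1 : B) + (-x.2.2).val • (x.1 : B) + x.2.1 = 0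
    have h2 : ((-x.2.2).val + x.2.2.val) % n = 0 := by
      rw [← ZMod.val_add, neg_add_cancel, ZMod.val_zero]
    have h3 : x.2.2.val • (x.1 : B) + (-x.2.2).val • (x.1 : B) = 0 := by
      rw [add_comm, ← add_nsmul, ← val_smul_eq _ (hb x.1), h2, zero_nsmul]
    rw [add_assoc, add_assoc, ← add_assoc (x.2.2.val • (x.1 : B)), h3, zero_add, neg_add_cancel]

/-! Birkhoff's example: `B = ℤ/p⁶ ⊕ ℤ/p⁴ ⊕ ℤ/p²` with generators `x, y, z`, and
`A_λ = ⟨p²x + py + z, p²y + pλz⟩`. -/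

/-- `B = ℤ/p⁶ ⊕ ℤ/p⁴ ⊕ ℤ/p²`. -/
abbrev Bb (p : ℕ) := ZMod (p ^ 6) × ZMod (p ^ 4) × ZMod (p ^ 2)

def xgen (p : ℕ) : Bb p := (1, 0, 0)
def ygen (p : ℕ) : Bb p := (0, 1, 0)
def zgen (p : ℕ) : Bb p := (0, 0, 1)

/-- `u = p²x + py + z`. -/
def ugen (p : ℕ) : Bb p := p ^ 2 • xgen p + p • ygen p + zgen p

/-- `v_λ = p²y + pλz`. -/
def vgen (p l : ℕ) : Bb p := p ^ 2 • ygen p + (p * l) • zgen p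

/-- `A_λ = ⟨u, v_λ⟩`. -/
def Asub (p l : ℕ) : AddSubgroup (Bb p) := AddSubgroup.closure {ugen p, vgen p l}

lemma ppow_zero (p n k : ℕ) (h : n ≤ k) : ((p : ZMod (p ^ n))) ^ k = 0 := by
  have h0 : ((p : ZMod (p ^ n))) ^ n = 0 := by rw [← Nat.cast_pow, ZMod.natCast_self]
  calc ((p : ZMod (p ^ n))) ^ k = (p : ZMod (p ^ n)) ^ n * (p : ZMod (p ^ n)) ^ (k - n) := by
        rw [← pow_add, Nat.add_sub_cancel' h]
    _ = 0 := by rw [h0, zero_mul]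

instance Asub_bounded (p l : ℕ) [Fact p.Prime] : BoundedSub (Asub p l) (p ^ 4) := by
  constructor
  rintro ⟨a, ha⟩
  simp only
  induction ha using AddSubgroup.closure_induction with
  | mem b hb =>
    rcases hb with rfl | rfl
    · show p ^ 4 • ugen p = 0
      simp only [ugen, xgen, ygen, zgen, smul_add, smul_smul, Prod.smul_mk, Prod.mk_add_mk,
        smul_zero, nsmul_eq_mul, Nat.cast_pow, mul_one, add_zero, zero_add, mul_zero]
      refine Prod.ext ?_ (Prod.ext ?_ ?_)
      · show (p : ZMod (p ^ 6)) ^ 4 * (p : ZMod (p ^ 6)) ^ 2 = 0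
        rw [← pow_add]; exact ppow_zero p 6 6 le_rfl
      · show (p : ZMod (p ^ 4)) ^ 4 * (p : ZMod (p ^ 4)) = 0
        rw [← pow_succ]; exact ppow_zero p 4 5 (by norm_num)
      · show (p : ZMod (p ^ 2)) ^ 4 = 0
        exact ppow_zero p 2 4 (by norm_num)
    · show p ^ 4 • vgen p l = 0
      simp only [vgen, ygen, zgen, smul_add, smul_smul, Prod.smul_mk, Prod.mk_add_mk,
        smul_zero, nsmul_eq_mul, Nat.cast_pow, Nat.cast_mul, mul_one, add_zero, zero_add,
        mul_zero]
      refine Prod.ext ?_ (Prod.ext ?_ ?_)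
      · show (0 : ZMod (p ^ 6)) = 0
        rfl
      · show (p : ZMod (p ^ 4)) ^ 4 * (p : ZMod (p ^ 4)) ^ 2 = 0
        rw [← pow_add]; exact ppow_zero p 4 6 (by norm_num)
      · show (p : ZMod (p ^ 2)) ^ 4 * ((p : ZMod (p ^ 2)) * l) = 0
        rw [ppow_zero p 2 4 (by norm_num), zero_mul]
  | zero => simp
  | add x y hx hy hx' hy' => simp [smul_add, hx', hy']
  | neg x hx hx' => simp [hx']

lemma castHom_pow_eq_zero {p : ℕ} [Fact p.Prime] {k : ℕ} (hk : k ≠ 0) (hd : p ∣ p^k)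
    (t : ZMod (p^k)) (h : (p : ZMod (p^k))^(k-1) * t = 0) :
    ZMod.castHom hd (ZMod p) t = 0 := by
  have hp : p.Prime := Fact.out
  haveI : NeZero (p^k) := ⟨pow_ne_zero _ hp.ne_zero⟩
  have h1 : ((p^(k-1) * t.val : ℕ) : ZMod (p^k)) = 0 := by
    push_cast
    rw [ZMod.natCast_val, ZMod.cast_id]
    exact h
  rw [ZMod.natCast_eq_zero_iff] at h1
  have hk' : p^k = p^(k-1) * p := by
    rw [← pow_succ]; congr 1; omega
  have h2 : p^(k-1) * p ∣ p^(k-1) * t.val := by rw [← hk']; exact h1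
  have h3 := (Nat.mul_dvd_mul_iff_left (pow_pos hp.pos (k-1))).mp h2
  rw [ZMod.castHom_apply, ← ZMod.natCast_val, ZMod.natCast_eq_zero_iff]
  exact h3

lemma dvd_of_castZMod {p : ℕ} [Fact p.Prime] (γ : ℤ)
    (h : ((γ * p^4 : ℤ) : ZMod (p^6)) = 0) : (p^2 : ℤ) ∣ γ := by
  have hp : p.Prime := Fact.out
  rw [ZMod.intCast_zmod_eq_zero_iff_dvd] at h
  have h6 : ((p:ℤ)^6) ∣ γ * p^4 := by push_cast at h ⊢; exact h
  have he : (p:ℤ)^6 = p^4 * p^2 := by ring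
  rw [he, mul_comm γ] at h6
  exact (mul_dvd_mul_iff_left (a := (p:ℤ)^4)
    (pow_ne_zero _ (by exact_mod_cast hp.ne_zero))).mp h6

/-- For `λ ≠ λ'` in `{0,…,p-1}` there is no automorphism `f` of
`B = ℤ/p⁶ ⊕ ℤ/p⁴ ⊕ ℤ/p²` with `f(A_λ) = A_{λ'}`. -/
theorem birkhoff_embeddings_nonisomorphic (p : ℕ) [Fact p.Prime] (l l' : ℕ)
    (hl : l < p) (hl' : l' < p) (hne : l ≠ l') :
    ¬ ∃ f : Bb p ≃+ Bb p, (Asub p l).map f.toAddMonoidHom = Asub p l' := by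
  rintro ⟨f, hA⟩
  have hp : p.Prime := Fact.out
  haveI : NeZero p := ⟨hp.ne_zero⟩
  haveI : NeZero (p^6) := ⟨pow_ne_zero _ hp.ne_zero⟩
  haveI : NeZero (p^4) := ⟨pow_ne_zero _ hp.ne_zero⟩
  haveI : NeZero (p^2) := ⟨pow_ne_zero _ hp.ne_zero⟩
  have hd6 : p ∣ p^6 := dvd_pow_self p (by norm_num)
  have hd4 : p ∣ p^4 := dvd_pow_self p (by norm_num)
  have hd2 : p ∣ p^2 := dvd_pow_self p (by norm_num)
  have hp6 : (p : ZMod (p^6))^6 = 0 := ppow_zero p 6 6 le_rfl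
  have hp4 : (p : ZMod (p^4))^4 = 0 := ppow_zero p 4 4 le_rfl
  have hp2 : (p : ZMod (p^2))^2 = 0 := ppow_zero p 2 2 le_rfl
  -- memberships
  have hu0 : f (ugen p) ∈ Asub p l' := by
    rw [← hA]
    exact AddSubgroup.mem_map_of_mem _ (AddSubgroup.subset_closure (by simp [Asub]))
  have hv0 : f (vgen p l) ∈ Asub p l' := by
    rw [← hA]
    exact AddSubgroup.mem_map_of_mem _ (AddSubgroup.subset_closure (by simp [Asub]))
  rw [Asub, AddSubgroup.mem_closure_pair] at hu0 hv0
  obtain ⟨α, β, hu⟩ := hu0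
  obtain ⟨γ, δ, hv⟩ := hv0
  obtain ⟨⟨X1, X2, X3⟩, hX⟩ : ∃ w : Bb p, f (xgen p) = w := ⟨_, rfl⟩
  obtain ⟨⟨Y1, Y2, Y3⟩, hY⟩ : ∃ w : Bb p, f (ygen p) = w := ⟨_, rfl⟩
  obtain ⟨⟨Z1, Z2, Z3⟩, hZ⟩ : ∃ w : Bb p, f (zgen p) = w := ⟨_, rfl⟩
  -- tuple forms of generators
  have hugen : ugen p = ((p : ZMod (p^6))^2, ((p : ZMod (p^4)), (1 : ZMod (p^2)))) := by
    refine Prod.ext ?_ (Prod.ext ?_ ?_) <;>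
      simp [ugen, xgen, ygen, zgen, nsmul_eq_mul]
  have hvgen : ∀ m : ℕ, vgen p m =
      ((0 : ZMod (p^6)), ((p : ZMod (p^4))^2, (p : ZMod (p^2)) * m)) := by
    intro m
    refine Prod.ext ?_ (Prod.ext ?_ ?_) <;>
      simp [vgen, ygen, zgen, nsmul_eq_mul] <;> push_cast <;> ring
  -- order constraints
  have hy0 : (p^4 : ℕ) • ygen p = (0 : Bb p) := by
    refine Prod.ext ?_ (Prod.ext ?_ ?_) <;>
      simp [ygen, nsmul_eq_mul, ZMod.natCast_self]
  have hz0 : (p^2 : ℕ) • zgen p = (0 : Bb p) := by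
    refine Prod.ext ?_ (Prod.ext ?_ ?_) <;>
      simp [zgen, nsmul_eq_mul, ZMod.natCast_self]
  have hYord : (p^4 : ℕ) • (⟨Y1, Y2, Y3⟩ : Bb p) = 0 := by
    rw [← hY, ← map_nsmul, hy0, map_zero]
  have hZord : (p^2 : ℕ) • (⟨Z1, Z2, Z3⟩ : Bb p) = 0 := by
    rw [← hZ, ← map_nsmul, hz0, map_zero]
  have F_Y1 : (p : ZMod (p^6))^4 * Y1 = 0 := by
    have h := congrArg Prod.fst hYord
    simp only [Prod.smul_mk, nsmul_eq_mul, Prod.fst_zero, Nat.cast_pow] at h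
    exact h
  have F_Z1 : (p : ZMod (p^6))^2 * Z1 = 0 := by
    have h := congrArg Prod.fst hZord
    simp only [Prod.smul_mk, nsmul_eq_mul, Prod.fst_zero, Nat.cast_pow] at h
    exact h
  have F_Z2 : (p : ZMod (p^4))^2 * Z2 = 0 := by
    have h := congrArg (fun w : Bb p => w.2.1) hZord
    simp only [Prod.smul_mk, nsmul_eq_mul, Nat.cast_pow] at h
    exact h
  -- expand f (ugen p) and f (vgen p l)
  have hfu : f (ugen p) = ((p : ZMod (p^6))^2 * X1 + p * Y1 + Z1,
      ((p : ZMod (p^4))^2 * X2 + p * Y2 + Z2, (p : ZMod (p^2)) * Y3 + Z3)) := by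
    rw [ugen, map_add, map_add, map_nsmul, map_nsmul, hX, hY, hZ]
    refine Prod.ext ?_ (Prod.ext ?_ ?_) <;>
      simp [nsmul_eq_mul] <;> push_cast <;> ring
  have hfv : f (vgen p l) = ((p : ZMod (p^6))^2 * Y1 + (p * l) * Z1,
      ((p : ZMod (p^4))^2 * Y2 + (p * l) * Z2, ((p : ZMod (p^2)) * l) * Z3)) := by
    rw [vgen, map_add, map_nsmul, map_nsmul, hY, hZ]
    refine Prod.ext ?_ (Prod.ext ?_ ?_) <;>
      simp [nsmul_eq_mul] <;> push_cast <;> ring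
  -- component equations
  have hu' := hu.trans hfu
  rw [hugen, hvgen l'] at hu'
  simp only [Prod.smul_mk, Prod.mk_add_mk, Prod.mk.injEq, smul_zero, zero_add, add_zero,
    zsmul_eq_mul, mul_one] at hu'
  obtain ⟨E1, E2, E3⟩ := hu'
  have hv' := hv.trans hfv
  rw [hugen, hvgen l'] at hv'
  simp only [Prod.smul_mk, Prod.mk_add_mk, Prod.mk.injEq, smul_zero, zero_add, add_zero,
    zsmul_eq_mul, mul_one] at hv'
  obtain ⟨E4, E5, E6⟩ := hv'
  -- derive p² ∣ γ
  have hγcast : ((γ * p^4 : ℤ) : ZMod (p^6)) = 0 := by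
    push_cast
    linear_combination (p : ZMod (p^6))^2 * E4 + F_Y1 + (p : ZMod (p^6)) * (l : ZMod (p^6)) * F_Z1
  obtain ⟨γ1, hγ1⟩ := dvd_of_castZMod γ hγcast
  rw [hγ1] at E5 E6
  push_cast at E5 E6
  -- key congruences mod p
  have S1 : (p : ZMod (p^6))^(6-1) * (X1 - (α : ZMod (p^6))) = 0 := by
    norm_num
    linear_combination (-(p : ZMod (p^6))^3) * E1 - F_Y1 - (p : ZMod (p^6)) * F_Z1
  have c1 : ZMod.castHom hd6 (ZMod p) X1 = (α : ZMod p) := by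
    have h := castHom_pow_eq_zero (by norm_num) hd6 _ S1
    rwa [map_sub, map_intCast, sub_eq_zero] at h
  have S2 : (p : ZMod (p^4))^(4-1) * (Y2 - (α : ZMod (p^4))) = 0 := by
    norm_num
    linear_combination (-(p : ZMod (p^4))^2) * E2 + ((β : ZMod (p^4)) - X2) * hp4 - F_Z2
  have c2 : ZMod.castHom hd4 (ZMod p) Y2 = (α : ZMod p) := by
    have h := castHom_pow_eq_zero (by norm_num) hd4 _ S2
    rwa [map_sub, map_intCast, sub_eq_zero] at h
  have S3 : (p : ZMod (p^2))^(2-1) * (Z3 - (α : ZMod (p^2))) = 0 := by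
    norm_num
    linear_combination (-(p : ZMod (p^2))) * E3
      + ((β : ZMod (p^2)) * (l' : ZMod (p^2)) - Y3) * hp2
  have c3 : ZMod.castHom hd2 (ZMod p) Z3 = (α : ZMod p) := by
    have h := castHom_pow_eq_zero (by norm_num) hd2 _ S3
    rwa [map_sub, map_intCast, sub_eq_zero] at h
  have S5 : (p : ZMod (p^4))^(4-1) * (Y2 - (δ : ZMod (p^4))) = 0 := by
    norm_num
    linear_combination (-(p : ZMod (p^4))) * E5 + (γ1 : ZMod (p^4)) * hp4
      - (l : ZMod (p^4)) * F_Z2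
  have c5 : ZMod.castHom hd4 (ZMod p) Y2 = (δ : ZMod p) := by
    have h := castHom_pow_eq_zero (by norm_num) hd4 _ S5
    rwa [map_sub, map_intCast, sub_eq_zero] at h
  have S6 : (p : ZMod (p^2))^(2-1) * ((l : ZMod (p^2)) * Z3 - (δ : ZMod (p^2)) * (l' : ZMod (p^2))) = 0 := by
    norm_num
    linear_combination (-1 : ZMod (p^2)) * E6 + (γ1 : ZMod (p^2)) * hp2
  have c6 : (l : ZMod p) * ZMod.castHom hd2 (ZMod p) Z3 = (δ : ZMod p) * (l' : ZMod p) := by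
    have h := castHom_pow_eq_zero (by norm_num) hd2 _ S6
    rwa [map_sub, map_mul, map_mul, map_natCast, map_intCast, map_natCast, sub_eq_zero] at h
  -- conclude α ≡ 0 mod p
  have hαδ : (α : ZMod p) = (δ : ZMod p) := c2.symm.trans c5
  have hkey : (α : ZMod p) * ((l : ZMod p) - (l' : ZMod p)) = 0 := by
    rw [c3, ← hαδ] at c6
    linear_combination c6
  have hll' : (l : ZMod p) - (l' : ZMod p) ≠ 0 := by
    intro h
    apply hne
    have h2 : (l : ZMod p) = (l' : ZMod p) := by linear_combination h
    have h3 := congrArg ZMod.val h2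
    rwa [ZMod.val_cast_of_lt hl, ZMod.val_cast_of_lt hl'] at h3
  have hα0 : (α : ZMod p) = 0 := by
    rcases mul_eq_zero.mp hkey with h | h
    · exact h
    · exact absurd h hll'
  -- first-row entries all ≡ 0 mod p
  have cX1 : ZMod.castHom hd6 (ZMod p) X1 = 0 := by rw [c1, hα0]
  have cY1 : ZMod.castHom hd6 (ZMod p) Y1 = 0 := by
    have h := castHom_pow_eq_zero (by norm_num) hd6 Y1 (by
      norm_num
      linear_combination (p : ZMod (p^6)) * F_Y1)
    exact h
  have cZ1 : ZMod.castHom hd6 (ZMod p) Z1 = 0 := by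
    have h := castHom_pow_eq_zero (by norm_num) hd6 Z1 (by
      norm_num
      linear_combination (p : ZMod (p^6))^3 * F_Z1)
    exact h
  -- surjectivity of f gives a contradiction
  obtain ⟨w, hw⟩ := f.surjective (xgen p)
  obtain ⟨w1, w2, w3⟩ := w
  have hwdec : (⟨w1, w2, w3⟩ : Bb p) =
      w1.val • xgen p + w2.val • ygen p + w3.val • zgen p := by
    refine Prod.ext ?_ (Prod.ext ?_ ?_) <;>
      simp [xgen, ygen, zgen, nsmul_eq_mul, ZMod.natCast_val, ZMod.cast_id]
  have hw1 : w1.val • (⟨X1, X2, X3⟩ : Bb p) + w2.val • (⟨Y1, Y2, Y3⟩ : Bb p)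
      + w3.val • (⟨Z1, Z2, Z3⟩ : Bb p) = xgen p := by
    rw [← hX, ← hY, ← hZ, ← map_nsmul, ← map_nsmul, ← map_nsmul, ← map_add, ← map_add,
      ← hwdec, hw]
  have hcomp := congrArg Prod.fst hw1
  simp only [Prod.fst_add, Prod.smul_mk, xgen, nsmul_eq_mul] at hcomp
  have final := congrArg (ZMod.castHom hd6 (ZMod p)) hcomp
  rw [map_add, map_add, map_mul, map_mul, map_mul, cX1, cY1, cZ1,
    mul_zero, mul_zero, mul_zero, add_zero, add_zero, map_one] at final
  exact zero_ne_one (α := ZMod p) final
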